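/- Covariance of the complementary channel: let n and ι be finite index types, K : ι → M_n(ℂ) a finite family of matrices, U, V ∈ M_n(ℂ) with U unitary, and Ω an ι×ι complex matrix such that V† · K_α · U = Σ_β Ω_{αβ} · K_β for every α ∈ ι. Define Φ^c(ρ) to be the ι×ι matrix with entries (Φ^c(ρ))_{αβ} = Tr(K_α ρ K_β†). Then for every ρ ∈ M_n(ℂ), Φ^c(U ρ U†) = Ω · Φ^c(ρ) · Ω†, provided V is unitary. -/
import Mathlib


open Matrix

/-- Covariance of the complementary channel: if `V† K_α U = Σ_β Ω_{αβ} K_β` for all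
`α`, with `U` and `V` unitary, then the complementary channel
`Φ^c(ρ)_{αβ} = Tr(K_α ρ K_β†)` satisfies `Φ^c(U ρ U†) = Ω Φ^c(ρ) Ω†`. -/
theorem complementary_channel_covariant {n ι : Type*} [Fintype n] [DecidableEq n]
    [Fintype ι] (K : ι → Matrix n n ℂ) (U V : Matrix n n ℂ)
    (hU : U ∈ Matrix.unitaryGroup n ℂ) (hV : V ∈ Matrix.unitaryGroup n ℂ)
    (Ω : Matrix ι ι ℂ)
    (hΩ : ∀ α, Vᴴ * K α * U = ∑ β, Ω α β • K β)
    (ρ : Matrix n n ℂ) :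
    (Matrix.of fun α β : ι => (K α * (U * ρ * Uᴴ) * (K β)ᴴ).trace) =
      Ω * (Matrix.of fun α β : ι => (K α * ρ * (K β)ᴴ).trace) * Ωᴴ := by
  have hVV : V * Vᴴ = 1 := (Matrix.mem_unitaryGroup_iff).mp hV
  have hVV' : Vᴴ * V = 1 := (Matrix.mem_unitaryGroup_iff').mp hV
  have hK : ∀ α, K α * U = V * ∑ β, Ω α β • K β := by
    intro α
    calc K α * U = (V * Vᴴ) * K α * U := by rw [hVV, one_mul]
      _ = V * (Vᴴ * K α * U) := by noncomm_ring
      _ = V * ∑ β, Ω α β • K β := by rw [hΩ α]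
  ext α β
  have h1 : K α * (U * ρ * Uᴴ) * (K β)ᴴ
      = V * ((∑ γ, Ω α γ • K γ) * ρ * (∑ δ, Ω β δ • K δ)ᴴ) * Vᴴ := by
    have : K α * (U * ρ * Uᴴ) * (K β)ᴴ = (K α * U) * ρ * (K β * U)ᴴ := by
      rw [conjTranspose_mul]; noncomm_ring
    rw [this, hK α, hK β, conjTranspose_mul]
    noncomm_ring
  simp only [Matrix.of_apply, Matrix.mul_apply, h1]
  rw [Matrix.trace_mul_cycle, ← Matrix.mul_assoc, hVV', one_mul]
  simp only [Matrix.sum_mul, Matrix.mul_sum, conjTranspose_sum, conjTranspose_smul,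
    Matrix.smul_mul, Matrix.mul_smul, trace_sum, trace_smul, smul_smul, smul_eq_mul,
    Matrix.conjTranspose_apply, Finset.mul_sum, Finset.sum_mul]
  refine Finset.sum_congr rfl fun δ _ => Finset.sum_congr rfl fun γ _ => ?_
  simp [RCLike.star_def, Matrix.of_apply]
  ring
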